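/- A connected graph G with maximum degree 2 admits a partition of its vertex set into three dominating sets if and only if G is a cycle of length k where 3 divides k. -/

import Mathlib

open SimpleGraph Function
open Fin.NatCast

/-- `D` is a dominating set of `G`. -/
def IsDomSet {V : Type*} (G : SimpleGraph V) (D : Set V) : Prop :=
  ∀ v : V, v ∈ D ∨ ∃ u ∈ D, G.Adj u v

lemma cycleGraph_adj_iff {m : ℕ} {u v : Fin (m + 2)} :
    (SimpleGraph.cycleGraph (m + 2)).Adj u v ↔ (v = u + 1 ∨ u = v + 1) := by
  rw [SimpleGraph.cycleGraph_adj]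
  constructor
  · rintro (h | h)
    · rw [sub_eq_iff_eq_add'] at h
      exact Or.inr h
    · rw [sub_eq_iff_eq_add'] at h
      exact Or.inl h
  · rintro (rfl | rfl)
    · exact Or.inr (by simp)
    · exact Or.inl (by simp)

lemma cycleGraph_adj_iff' {k : ℕ} [NeZero k] (hk : 2 ≤ k) {u v : Fin k} :
    (SimpleGraph.cycleGraph k).Adj u v ↔ (v = u + 1 ∨ u = v + 1) := by
  obtain ⟨m, rfl⟩ : ∃ m, k = m + 2 := ⟨k - 2, by omega⟩
  exact cycleGraph_adj_iff

lemma forward {V : Type*} [Fintype V] [DecidableEq V]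
    (G : SimpleGraph V) [DecidableRel G.Adj]
    (hconn : G.Connected) (hdeg : ∀ v : V, G.degree v ≤ 2)
    (f : V → Fin 3) (hf : ∀ i : Fin 3, IsDomSet G (f ⁻¹' {i})) :
    ∃ k : ℕ, 3 ∣ k ∧ Nonempty (G ≃g SimpleGraph.cycleGraph k) := by
  classical
  -- three distinct neighbors is impossible
  have hdeg3 : ∀ v u₁ u₂ u₃ : V, G.Adj v u₁ → G.Adj v u₂ → G.Adj v u₃ →
      u₁ ≠ u₂ → u₁ ≠ u₃ → u₂ ≠ u₃ → False := by
    intro v u₁ u₂ u₃ h1 h2 h3 d12 d13 d23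
    have hsub : ({u₁, u₂, u₃} : Finset V) ⊆ G.neighborFinset v := by
      intro x hx
      simp only [Finset.mem_insert, Finset.mem_singleton] at hx
      rcases hx with rfl | rfl | rfl
      · exact (G.mem_neighborFinset v x).mpr h1
      · exact (G.mem_neighborFinset v x).mpr h2
      · exact (G.mem_neighborFinset v x).mpr h3
    have hcard : ({u₁, u₂, u₃} : Finset V).card = 3 := by
      rw [Finset.card_insert_of_notMem (by simp [d12, d13]),
        Finset.card_insert_of_notMem (by simp [d23]), Finset.card_singleton]
    have := (hcard ▸ Finset.card_le_card hsub).trans (hdeg v)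
    omega
  -- existence of a neighbor of each color other than own color
  have hex : ∀ v : V, ∀ i : Fin 3, i ≠ f v → ∃ u, G.Adj v u ∧ f u = i := by
    intro v i hi
    rcases hf i v with h | ⟨u, hu, hadj⟩
    · exact absurd (Set.mem_singleton_iff.mp h).symm hi
    · exact ⟨u, hadj.symm, Set.mem_singleton_iff.mp hu⟩
  -- uniqueness of the neighbor of a given color distinct from own color
  have huniq : ∀ v u₁ u₂ : V, ∀ i : Fin 3, i ≠ f v →
      G.Adj v u₁ → f u₁ = i → G.Adj v u₂ → f u₂ = i → u₁ = u₂ := by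
    intro v u₁ u₂ i hi h1 hf1 h2 hf2
    by_contra hne
    have hkey0 : ∀ i c : Fin 3, i ≠ c → -(i + c) ≠ i ∧ -(i + c) ≠ c := by decide
    have hkey := hkey0 i (f v) hi
    obtain ⟨w, hw, hfw⟩ := hex v (-(i + f v)) hkey.2
    exact hdeg3 v u₁ u₂ w h1 h2 hw hne
      (fun h => hkey.1 (by rw [← hfw, ← h, hf1]))
      (fun h => hkey.1 (by rw [← hfw, ← h, hf2]))
  have hc1 : ∀ c : Fin 3, c + 1 ≠ c := by decide
  choose nxt hnxt_adj hnxt_f using fun v => hex v (f v + 1) (hc1 (f v))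
  -- nxt is injective
  have hinj : Function.Injective nxt := by
    intro a b hab
    have hfab : f a = f b := by
      have h1 := hnxt_f a
      have h2 := hnxt_f b
      rw [← hab] at h2
      exact add_right_cancel (h1.symm.trans h2)
    refine huniq (nxt a) a b (f a) ?_ (hnxt_adj a).symm rfl ?_ hfab.symm
    · rw [hnxt_f a]; exact fun h => hc1 (f a) h.symm
    · rw [hab]; exact (hnxt_adj b).symm
  -- neighbors are exactly nxt and the preimage under nxt
  have hnbr : ∀ v w : V, G.Adj v w → (w = nxt v ∨ v = nxt w) := by
    intro v w hvw
    have htri : ∀ a b : Fin 3, b = a + 1 ∨ a = b + 1 ∨ b = a := by decide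
    rcases htri (f v) (f w) with h | h | h
    · exact Or.inl (huniq v w (nxt v) (f v + 1) (hc1 (f v)) hvw h (hnxt_adj v) (hnxt_f v))
    · exact Or.inr (huniq w v (nxt w) (f w + 1) (hc1 (f w)) hvw.symm h (hnxt_adj w) (hnxt_f w))
    · -- impossible : adjacent vertices with the same color
      exfalso
      have hkey : f v + 2 ≠ f v := by generalize f v = c; revert c; decide
      obtain ⟨u, hu, hfu⟩ := hex v (f v + 2) hkey
      refine hdeg3 v w (nxt v) u hvw (hnxt_adj v) hu ?_ ?_ ?_
      · exact fun h0 => hc1 (f v) (by rw [← hnxt_f v, ← h0, h])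
      · exact fun h0 => hkey (by rw [← hfu, ← h0, h])
      · intro h0
        have : f v + 1 = f v + 2 := by rw [← hnxt_f v, h0, hfu]
        revert this; generalize f v = c; revert c; decide
  obtain ⟨v0⟩ : Nonempty V := hconn.nonempty
  -- v0 is a periodic point of nxt
  have hper : ∃ d, 0 < d ∧ nxt^[d] v0 = v0 := by
    obtain ⟨m, n, hmn, heq⟩ := Finite.exists_ne_map_eq_of_infinite (fun n : ℕ => nxt^[n] v0)
    rcases Nat.lt_or_ge m n with h | h
    · refine ⟨n - m, by omega, hinj.iterate m ?_⟩
      rw [← Function.iterate_add_apply, show m + (n - m) = n by omega]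
      exact heq.symm
    · refine ⟨m - n, by omega, hinj.iterate n ?_⟩
      rw [← Function.iterate_add_apply, show n + (m - n) = m by omega]
      exact heq
  obtain ⟨d, hd0, hdper⟩ := hper
  obtain ⟨K, hKdef⟩ : ∃ K, K = Function.minimalPeriod nxt v0 := ⟨_, rfl⟩
  have hKpos : 0 < K := by
    rw [hKdef]
    exact (Function.IsPeriodicPt.minimalPeriod_pos hd0 hdper)
  have hKper : nxt^[K] v0 = v0 := by
    rw [hKdef]; exact Function.iterate_minimalPeriod
  -- colors along the orbit
  have hcol : ∀ n : ℕ, f (nxt^[n] v0) = f v0 + (n : Fin 3) := by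
    intro n
    induction n with
    | zero => simp
    | succ n ih =>
      rw [Function.iterate_succ_apply', hnxt_f, ih]
      push_cast
      rw [add_assoc]
  have hK3dvd : 3 ∣ K := by
    have h0 : f v0 + (K : Fin 3) = f v0 + 0 := by
      rw [add_zero, ← hcol K, hKper]
    have h1 : (K : Fin 3) = 0 := add_left_cancel h0
    have h2 : K % 3 = 0 := by
      have := congrArg Fin.val h1
      simpa [Fin.val_natCast] using this
    exact Nat.dvd_of_mod_eq_zero h2
  have hK3 : 3 ≤ K := Nat.le_of_dvd hKpos hK3dvd
  -- the orbit of v0 is everything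
  have horbit_step : ∀ v w : V, G.Adj v w → (∃ n, nxt^[n] v0 = v) → ∃ n, nxt^[n] v0 = w := by
    rintro v w hvw ⟨n, rfl⟩
    rcases hnbr _ _ hvw with h1 | h1
    · exact ⟨n + 1, by rw [Function.iterate_succ_apply', h1]⟩
    · refine ⟨n + K - 1, hinj ?_⟩
      have e1 : nxt^[n + K] v0 = nxt (nxt^[n + K - 1] v0) := by
        rw [show n + K = (n + K - 1) + 1 by omega]
        exact Function.iterate_succ_apply' nxt (n + K - 1) v0
      have e2 : nxt^[n + K] v0 = nxt^[n] v0 := by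
        rw [Function.iterate_add_apply, hKper]
      rw [← e1, e2]
      exact h1
  have hwalk : ∀ (a b : V) (p : G.Walk a b), (∃ n, nxt^[n] v0 = a) → ∃ n, nxt^[n] v0 = b := by
    intro a b p
    induction p with
    | nil => exact id
    | cons h q ih => exact fun ha => ih (horbit_step _ _ h ha)
  have horbit : ∀ v : V, ∃ n, nxt^[n] v0 = v := fun v =>
    (hconn.preconnected v0 v).elim fun p => hwalk v0 v p ⟨0, rfl⟩
  haveI : NeZero K := ⟨by omega⟩
  -- the bijection with Fin K
  set g : Fin K → V := fun i => nxt^[i.val] v0 with hg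
  have hmod : ∀ n : ℕ, nxt^[n % K] v0 = nxt^[n] v0 := by
    intro n
    rw [hKdef]
    exact Function.iterate_mod_minimalPeriod_eq
  have hginj : Function.Injective g := by
    intro i j hij
    refine Fin.ext (Function.iterate_injOn_Iio_minimalPeriod ?_ ?_ hij)
    · rw [← hKdef]; exact i.isLt
    · rw [← hKdef]; exact j.isLt
  have hgsurj : Function.Surjective g := by
    intro v
    obtain ⟨n, hn⟩ := horbit v
    exact ⟨⟨n % K, Nat.mod_lt _ hKpos⟩, (hmod n).trans hn⟩
  have hgsucc : ∀ i : Fin K, g (i + 1) = nxt (g i) := by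
    intro i
    show nxt^[(i + 1 : Fin K).val] v0 = nxt (nxt^[i.val] v0)
    have hv : (i + 1 : Fin K).val = (i.val + 1) % K := by
      rw [Fin.val_add, Fin.val_one']
      congr 1
      rw [Nat.mod_eq_of_lt (show (1:ℕ) < K by omega)]
    rw [hv, hmod (i.val + 1)]
    exact Function.iterate_succ_apply' nxt i.val v0
  have hadj : ∀ i j : Fin K, G.Adj (g i) (g j) ↔ (j = i + 1 ∨ i = j + 1) := by
    intro i j
    constructor
    · intro h
      rcases hnbr _ _ h with h1 | h1
      · exact Or.inl (hginj (h1.trans (hgsucc i).symm))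
      · exact Or.inr (hginj (h1.trans (hgsucc j).symm))
    · rintro (rfl | rfl)
      · rw [hgsucc]; exact hnxt_adj (g i)
      · rw [hgsucc]; exact (hnxt_adj (g j)).symm
  refine ⟨K, hK3dvd, ⟨RelIso.symm ⟨Equiv.ofBijective g ⟨hginj, hgsurj⟩, ?_⟩⟩⟩
  intro i j
  show G.Adj (g i) (g j) ↔ (SimpleGraph.cycleGraph K).Adj i j
  rw [hadj i j, cycleGraph_adj_iff' (by omega)]

lemma val_add_one_mod3 {k : ℕ} [NeZero k] (h3 : 3 ∣ k) (hk : 3 ≤ k) (a : Fin k) :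
    (((a + 1 : Fin k).val : Fin 3)) = ((a.val : Fin 3)) + 1 := by
  have h1 : ((1 : Fin k)).val = 1 := by
    rw [Fin.val_one']; exact Nat.mod_eq_of_lt (by omega)
  apply Fin.ext
  rw [Fin.val_add, h1]
  simp only [Fin.val_natCast, Fin.val_add, Fin.val_one]
  rw [Nat.mod_mod_of_dvd _ h3]
  omega

lemma backward {V : Type*} [Fintype V] [DecidableEq V]
    (G : SimpleGraph V) [DecidableRel G.Adj]
    (hconn : G.Connected) {k : ℕ} (h3 : 3 ∣ k) (e : G ≃g SimpleGraph.cycleGraph k) :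
    ∃ f : V → Fin 3, ∀ i : Fin 3, IsDomSet G (f ⁻¹' {i}) := by
  have hne : Nonempty V := hconn.nonempty
  have hk0 : k ≠ 0 := by
    rintro rfl
    exact (e.toEquiv (Classical.arbitrary V)).elim0
  have hk3 : 3 ≤ k := (Nat.le_of_dvd (Nat.pos_of_ne_zero hk0) h3)
  haveI : NeZero k := ⟨hk0⟩
  obtain ⟨m, rfl⟩ : ∃ m, k = m + 2 := ⟨k - 2, by omega⟩
  refine ⟨fun v => (((e v : Fin (m + 2)).val : Fin 3)), fun i v => ?_⟩
  set a : Fin (m + 2) := e v with ha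
  set c : Fin 3 := (a.val : Fin 3) with hc
  have hadj : ∀ b : Fin (m + 2), (SimpleGraph.cycleGraph (m + 2)).Adj b a → G.Adj (e.symm b) v := by
    intro b hb
    have := (e.symm.map_adj_iff (v := b) (w := a)).mpr hb
    rwa [show e.symm a = v from e.symm_apply_apply v] at this
  have htri : ∀ i c : Fin 3, i = c ∨ i = c + 1 ∨ i + 1 = c := by decide
  rcases htri i c with rfl | rfl | hic
  · exact Or.inl rfl
  · refine Or.inr ⟨e.symm (a + 1), ?_, hadj _ ?_⟩
    · simp only [Set.mem_preimage, Set.mem_singleton_iff, e.apply_symm_apply]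
      exact (val_add_one_mod3 h3 hk3 a)
    · exact cycleGraph_adj_iff.mpr (Or.inr rfl)
  · refine Or.inr ⟨e.symm (a - 1), ?_, hadj _ ?_⟩
    · simp only [Set.mem_preimage, Set.mem_singleton_iff, e.apply_symm_apply]
      have := val_add_one_mod3 h3 hk3 (a - 1)
      rw [sub_add_cancel] at this
      have h2 : ((a - 1 : Fin (m+2)).val : Fin 3) + 1 = c := this ▸ hc ▸ rfl
      show ((a - 1 : Fin (m+2)).val : Fin 3) = i
      have : ((a - 1 : Fin (m+2)).val : Fin 3) + 1 = i + 1 := h2.trans hic.symm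
      exact add_right_cancel this
    · exact cycleGraph_adj_iff.mpr (Or.inl (sub_add_cancel a 1).symm)

theorem maxdeg_two_three_domatic_iff_cycle_div_three {V : Type*} [Fintype V] [DecidableEq V]
    (G : SimpleGraph V) [DecidableRel G.Adj]
    (hconn : G.Connected) (hdeg : ∀ v : V, G.degree v ≤ 2) :
    (∃ f : V → Fin 3, ∀ i : Fin 3, IsDomSet G (f ⁻¹' {i})) ↔
      ∃ k : ℕ, 3 ∣ k ∧ Nonempty (G ≃g SimpleGraph.cycleGraph k) := by
  constructor
  · rintro ⟨f, hf⟩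
    exact forward G hconn hdeg f hf
  · rintro ⟨k, h3, ⟨e⟩⟩
    exact backward G hconn h3 e
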